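/- Let L > 0 and let γ : ℝ → ℝ² be a C³, L-periodic, unit-speed curve with unit normal n(s) = J(γ'(s)) where J(a,b) = (−b,a), and signed curvature κ(s) = ⟨γ''(s), n(s)⟩. Assume κ(s) + ⟨γ(s), n(s)⟩ = 0 for all s, and that ∫₀^L κ(s) ds = 2π. Then κ(s) > 0 for all s ∈ ℝ, i.e. the curve is strictly convex. -/

import Mathlib

open Real
open scoped InnerProductSpace

/-- Rotation by `π/2` in the Euclidean plane: `J(a, b) = (-b, a)`. -/
noncomputable def Jrot (v : EuclideanSpace ℝ (Fin 2)) : EuclideanSpace ℝ (Fin 2) :=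
  WithLp.toLp 2 ![-(v 1), v 0]

/-- A closed unit-speed plane curve of rotation index `+1` satisfying the
contracting self-similar equation `κ + ⟨γ, n⟩ = 0` is strictly convex: `κ > 0`. -/
theorem contracting_self_similar_strictly_convex
    (L : ℝ) (hL : 0 < L)
    (γ : ℝ → EuclideanSpace ℝ (Fin 2))
    (hγ : ContDiff ℝ 3 γ)
    (hper : ∀ s : ℝ, γ (s + L) = γ s)
    (hunit : ∀ s : ℝ, ‖deriv γ s‖ = 1)
    (n : ℝ → EuclideanSpace ℝ (Fin 2))
    (hn : ∀ s : ℝ, n s = Jrot (deriv γ s))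
    (κ : ℝ → ℝ)
    (hκ : ∀ s : ℝ, κ s = ⟪deriv (deriv γ) s, n s⟫_ℝ)
    (heq : ∀ s : ℝ, κ s + ⟪γ s, n s⟫_ℝ = 0)
    (hindex : ∫ s in (0:ℝ)..L, κ s = 2 * π) :
    ∀ s : ℝ, 0 < κ s := by
  -- regularity
  have hγ1 : Differentiable ℝ γ := hγ.differentiable (by norm_num)
  have hT : ContDiff ℝ 2 (deriv γ) :=
    ((contDiff_succ_iff_deriv (n := 2) (f := γ)).mp (by exact_mod_cast hγ)).2.2
  have hT1 : Differentiable ℝ (deriv γ) := hT.differentiable (by norm_num)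
  -- component derivatives
  have hdA : ∀ (i : Fin 2) (s : ℝ), HasDerivAt (fun t => γ t i) (deriv γ s i) s := by
    intro i s
    have h0 := ((EuclideanSpace.proj i : EuclideanSpace ℝ (Fin 2) →L[ℝ] ℝ)).hasFDerivAt.comp_hasDerivAt
      s (hγ1 s).hasDerivAt
    exact h0
  have hdA' : ∀ (i : Fin 2) (s : ℝ),
      HasDerivAt (fun t => deriv γ t i) (deriv (deriv γ) s i) s := by
    intro i s
    have h0 := ((EuclideanSpace.proj i : EuclideanSpace ℝ (Fin 2) →L[ℝ] ℝ)).hasFDerivAt.comp_hasDerivAt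
      s (hT1 s).hasDerivAt
    exact h0
  -- unit speed, componentwise
  have hunit2 : ∀ s : ℝ, (deriv γ s 0) ^ 2 + (deriv γ s 1) ^ 2 = 1 := by
    intro s
    have h := hunit s
    have h1 : Real.sqrt ((deriv γ s 0) ^ 2 + (deriv γ s 1) ^ 2) = 1 := by
      rw [EuclideanSpace.norm_eq] at h
      simpa [Fin.sum_univ_two, sq_abs] using h
    nlinarith [Real.sq_sqrt (show (0:ℝ) ≤ (deriv γ s 0)^2 + (deriv γ s 1)^2 by positivity), h1]
  -- orthogonality ⟨T, T'⟩ = 0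
  have horth : ∀ s : ℝ,
      deriv γ s 0 * deriv (deriv γ) s 0 + deriv γ s 1 * deriv (deriv γ) s 1 = 0 := by
    intro s
    have hq : HasDerivAt (fun t => (deriv γ t 0) ^ 2 + (deriv γ t 1) ^ 2)
        (2 * (deriv γ s 0 * deriv (deriv γ) s 0 + deriv γ s 1 * deriv (deriv γ) s 1)) s := by
      have := ((hdA' 0 s).mul (hdA' 0 s)).add ((hdA' 1 s).mul (hdA' 1 s))
      have e : (fun t => (deriv γ t 0) ^ 2 + (deriv γ t 1) ^ 2) = ((fun t => deriv γ t 0) * fun t => deriv γ t 0) + (fun t => deriv γ t 1) * fun t => deriv γ t 1 := by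
        funext t; simp only [Pi.add_apply, Pi.mul_apply]; ring
      rw [e]; exact this.congr_deriv (by ring)
    have hconst : (fun t => (deriv γ t 0) ^ 2 + (deriv γ t 1) ^ 2) = fun _ : ℝ => (1:ℝ) :=
      funext hunit2
    rw [hconst] at hq
    have := hq.unique (hasDerivAt_const s 1)
    linarith
  -- curvature formulas
  have hκ2 : ∀ s : ℝ, κ s =
      -(deriv (deriv γ) s 0 * deriv γ s 1) + deriv (deriv γ) s 1 * deriv γ s 0 := by
    intro s
    rw [hκ s, hn s]
    simp [Jrot, PiLp.inner_apply, Fin.sum_univ_two]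
    ring
  have hκγ : ∀ s : ℝ, κ s = γ s 0 * deriv γ s 1 - γ s 1 * deriv γ s 0 := by
    intro s
    have h := heq s
    rw [hn s] at h
    simp [Jrot, PiLp.inner_apply, Fin.sum_univ_two] at h
    linarith
  -- the ODE κ' = κ ⟨γ, T⟩
  set f : ℝ → ℝ := fun s => γ s 0 * deriv γ s 0 + γ s 1 * deriv γ s 1 with hf_def
  have hκderiv : ∀ s : ℝ, HasDerivAt κ (κ s * f s) s := by
    intro s
    have hφ : HasDerivAt (fun t => γ t 0 * deriv γ t 1 - γ t 1 * deriv γ t 0)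
        (deriv γ s 0 * deriv γ s 1 + γ s 0 * deriv (deriv γ) s 1
          - (deriv γ s 1 * deriv γ s 0 + γ s 1 * deriv (deriv γ) s 0)) s :=
      ((hdA 0 s).mul (hdA' 1 s)).sub ((hdA 1 s).mul (hdA' 0 s))
    have hval : deriv γ s 0 * deriv γ s 1 + γ s 0 * deriv (deriv γ) s 1
          - (deriv γ s 1 * deriv γ s 0 + γ s 1 * deriv (deriv γ) s 0)
        = κ s * f s := by
      have e1 := hunit2 s
      have e2 := horth s
      have e3 := hκ2 s
      show _ = κ s * (γ s 0 * deriv γ s 0 + γ s 1 * deriv γ s 1)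
      linear_combination (-(γ s 0 * deriv γ s 0) - γ s 1 * deriv γ s 1) * e3
        + (γ s 0 * deriv γ s 1 - γ s 1 * deriv γ s 0) * e2
        + (-(γ s 0 * deriv (deriv γ) s 1) + γ s 1 * deriv (deriv γ) s 0) * e1
    exact (hval ▸ hφ).congr_of_eventuallyEq (Filter.Eventually.of_forall hκγ)
  -- f is continuous
  have hf_cont : Continuous f := by
    apply Continuous.add
    · exact ((EuclideanSpace.proj (0 : Fin 2)).continuous.comp hγ.continuous).mul
        ((EuclideanSpace.proj (0 : Fin 2)).continuous.comp hT.continuous)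
    · exact ((EuclideanSpace.proj (1 : Fin 2)).continuous.comp hγ.continuous).mul
        ((EuclideanSpace.proj (1 : Fin 2)).continuous.comp hT.continuous)
  set F : ℝ → ℝ := fun u => ∫ t in (0:ℝ)..u, f t with hF_def
  have hF : ∀ s : ℝ, HasDerivAt F (f s) s := fun s =>
    (hf_cont.integral_hasStrictDerivAt 0 s).hasDerivAt
  -- κ(s) exp(-F(s)) is constant
  have hg : ∀ s : ℝ, HasDerivAt (fun t => κ t * Real.exp (-F t)) 0 s := by
    intro s
    have := (hκderiv s).mul ((hF s).neg.exp)
    exact this.congr_deriv (by simp only [Pi.neg_apply]; ring)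
  have hgconst : ∀ s : ℝ, κ s * Real.exp (-F s) = κ 0 * Real.exp (-F 0) := by
    intro s
    exact is_const_of_deriv_eq_zero (fun x => (hg x).differentiableAt)
      (fun x => (hg x).deriv) s 0
  have hF0 : F 0 = 0 := by simp [hF_def]
  have hκform : ∀ s : ℝ, κ s = κ 0 * Real.exp (F s) := by
    intro s
    have h := hgconst s
    rw [hF0] at h
    simp at h
    have hepos := Real.exp_pos (-F s)
    have : κ s = κ 0 / Real.exp (-F s) := by
      field_simp at h ⊢
      linarith [h]
    rw [this, Real.exp_neg]
    field_simp
  -- κ 0 > 0 from the rotation index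
  have hκ0 : 0 < κ 0 := by
    by_contra h
    push_neg at h
    have hnonneg : ∀ u : ℝ, 0 ≤ -κ u := by
      intro u
      rw [hκform u]
      have := Real.exp_pos (F u)
      nlinarith
    have h1 : 0 ≤ ∫ s in (0:ℝ)..L, -κ s :=
      intervalIntegral.integral_nonneg_of_forall hL.le hnonneg
    rw [intervalIntegral.integral_neg, hindex] at h1
    nlinarith [Real.pi_pos]
  intro s
  rw [hκform s]
  exact mul_pos hκ0 (Real.exp_pos _)
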